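/- Every Bézout L-ring of almost stable range 1 has stable range 2. -/
import Mathlib

open TwoSidedIdeal

section Helpers

variable {R : Type*} [Ring R]

/-- generator is in the span of a singleton -/
private lemma mem_span_self (x : R) : x ∈ TwoSidedIdeal.span {x} :=
  TwoSidedIdeal.subset_span rfl

/-- the span of a singleton is below any two-sided ideal containing the element -/
private lemma span_singleton_le {x : R} {I : TwoSidedIdeal R} (h : x ∈ I) :
    TwoSidedIdeal.span {x} ≤ I := by
  intro t ht
  rw [TwoSidedIdeal.mem_span_iff] at ht
  exact ht I (Set.singleton_subset_iff.mpr h)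

/-- In a right Bézout L-ring, a two-sidedly comaximal pair is right unimodular. -/
private lemma pair_unimod
    (hrBez : ∀ a b : R, ∃ d : R,
      {x : R | ∃ u v : R, x = a * u + b * v} = {x : R | ∃ u : R, x = d * u})
    (hL : ∀ a : R, TwoSidedIdeal.span {a} = ⊤ → IsUnit a)
    {x y : R}
    (h : TwoSidedIdeal.span {x} ⊔ TwoSidedIdeal.span {y} = ⊤) :
    ∃ u v : R, x * u + y * v = 1 := by
  obtain ⟨d, hd⟩ := hrBez x y
  have hx : ∃ u, x = d * u := by
    have hx0 : x ∈ {w : R | ∃ u v : R, w = x * u + y * v} := ⟨1, 0, by simp⟩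
    rw [hd] at hx0
    exact hx0
  have hy : ∃ u, y = d * u := by
    have hy0 : y ∈ {w : R | ∃ u v : R, w = x * u + y * v} := ⟨0, 1, by simp⟩
    rw [hd] at hy0
    exact hy0
  obtain ⟨x1, hx1⟩ := hx
  obtain ⟨y1, hy1⟩ := hy
  have hdx : x ∈ TwoSidedIdeal.span {d} := by
    rw [hx1]; exact (TwoSidedIdeal.span {d}).mul_mem_right d x1 (mem_span_self d)
  have hdy : y ∈ TwoSidedIdeal.span {d} := by
    rw [hy1]; exact (TwoSidedIdeal.span {d}).mul_mem_right d y1 (mem_span_self d)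
  have hle : TwoSidedIdeal.span {x} ⊔ TwoSidedIdeal.span {y} ≤ TwoSidedIdeal.span {d} :=
    sup_le (span_singleton_le hdx) (span_singleton_le hdy)
  have htopd : TwoSidedIdeal.span {d} = ⊤ := top_le_iff.mp (h ▸ hle)
  obtain ⟨ud, hud⟩ := hL d htopd
  have h1 : (1 : R) ∈ {w : R | ∃ u : R, w = d * u} := by
    refine ⟨(↑ud⁻¹ : Rˣ), ?_⟩
    rw [← hud]
    exact (ud.mul_inv).symm
  rw [← hd] at h1
  obtain ⟨u, v, huv⟩ := h1
  exact ⟨u, v, huv.symm⟩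

/-- Triple version. -/
private lemma triple_unimod
    (hrBez : ∀ a b : R, ∃ d : R,
      {x : R | ∃ u v : R, x = a * u + b * v} = {x : R | ∃ u : R, x = d * u})
    (hL : ∀ a : R, TwoSidedIdeal.span {a} = ⊤ → IsUnit a)
    {x y z : R}
    (h : TwoSidedIdeal.span {x} ⊔ TwoSidedIdeal.span {y} ⊔ TwoSidedIdeal.span {z} = ⊤) :
    ∃ u v w : R, x * u + y * v + z * w = 1 := by
  obtain ⟨d, hd⟩ := hrBez y z
  have hy : ∃ u, y = d * u := by
    have hy0 : y ∈ {w : R | ∃ u v : R, w = y * u + z * v} := ⟨1, 0, by simp⟩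
    rw [hd] at hy0
    exact hy0
  have hz : ∃ u, z = d * u := by
    have hz0 : z ∈ {w : R | ∃ u v : R, w = y * u + z * v} := ⟨0, 1, by simp⟩
    rw [hd] at hz0
    exact hz0
  obtain ⟨y1, hy1⟩ := hy
  obtain ⟨z1, hz1⟩ := hz
  have hdy : y ∈ TwoSidedIdeal.span {d} := by
    rw [hy1]; exact (TwoSidedIdeal.span {d}).mul_mem_right d y1 (mem_span_self d)
  have hdz : z ∈ TwoSidedIdeal.span {d} := by
    rw [hz1]; exact (TwoSidedIdeal.span {d}).mul_mem_right d z1 (mem_span_self d)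
  have h2 : TwoSidedIdeal.span {x} ⊔ TwoSidedIdeal.span {d} = ⊤ := by
    rw [eq_top_iff, ← h]
    refine sup_le (sup_le le_sup_left ?_) ?_
    · exact (span_singleton_le hdy).trans le_sup_right
    · exact (span_singleton_le hdz).trans le_sup_right
  obtain ⟨u, s, hus⟩ := pair_unimod hrBez hL h2
  have hds : d * s ∈ {w : R | ∃ u : R, w = d * u} := ⟨s, rfl⟩
  rw [← hd] at hds
  obtain ⟨v, w, hvw⟩ := hds
  refine ⟨u, v, w, ?_⟩
  rw [add_assoc, ← hvw, hus]

set_option maxHeartbeats 1600000 in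
/-- Key "flip" lemma: the (left-handed) almost stable range 1 condition yields a
right-handed version. -/
private lemma flip_asr1
    (hrBez : ∀ a b : R, ∃ d : R,
      {x : R | ∃ u v : R, x = a * u + b * v} = {x : R | ∃ u : R, x = d * u})
    (hL : ∀ a : R, TwoSidedIdeal.span {a} = ⊤ → IsUnit a)
    (hASR1 : ∀ a b c : R, c ≠ 0 →
      TwoSidedIdeal.span {a} ⊔ TwoSidedIdeal.span {b} ⊔ TwoSidedIdeal.span {c} = ⊤ →
      ∃ l : R, TwoSidedIdeal.span {l * a + b} ⊔ TwoSidedIdeal.span {c} = ⊤)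
    {X Y z : R} (hz : z ≠ 0)
    (h : TwoSidedIdeal.span {X} ⊔ TwoSidedIdeal.span {Y} ⊔ TwoSidedIdeal.span {z} = ⊤) :
    ∃ r : R, TwoSidedIdeal.span {X + Y * r} ⊔ TwoSidedIdeal.span {z} = ⊤ := by
  obtain ⟨p, q, w, hpqw⟩ := triple_unimod hrBez hL h
  -- precondition for hASR1 on (Y*q, p, z)
  have hpre : TwoSidedIdeal.span {Y * q} ⊔ TwoSidedIdeal.span {p} ⊔
      TwoSidedIdeal.span {z} = ⊤ := by
    apply TwoSidedIdeal.eq_top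
    rw [← hpqw]
    refine TwoSidedIdeal.add_mem _ (TwoSidedIdeal.add_mem _ ?_ ?_) ?_
    · exact mem_sup_left (mem_sup_right
        ((TwoSidedIdeal.span {p}).mul_mem_left X p (mem_span_self p)))
    · exact mem_sup_left (mem_sup_left (mem_span_self (Y * q)))
    · exact mem_sup_right ((TwoSidedIdeal.span {z}).mul_mem_right z w (mem_span_self z))
  obtain ⟨k, hk⟩ := hASR1 (Y * q) p z hz hpre
  obtain ⟨s, w2, hsw2⟩ := pair_unimod hrBez hL hk
  refine ⟨q * (s * (1 - k * X)), ?_⟩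
  have hzw : z * w = 1 - X * p - Y * q := by
    rw [← hpqw]; noncomm_ring
  have hzw2 : z * w2 = 1 - (k * (Y * q) + p) * s := by
    rw [← hsw2]; noncomm_ring
  have m1 : (p + (1 - p * X) * k) * (X + Y * (q * (s * (1 - k * X))))
      ∈ TwoSidedIdeal.span {X + Y * (q * (s * (1 - k * X)))} :=
    TwoSidedIdeal.mul_mem_left _ _ _ (mem_span_self _)
  have m2 : (1 - p * X) * (z * w2) * (1 - k * X) ∈ TwoSidedIdeal.span {z} := by
    refine TwoSidedIdeal.mul_mem_right _ _ _ (TwoSidedIdeal.mul_mem_left _ _ _ ?_)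
    exact TwoSidedIdeal.mul_mem_right _ _ _ (mem_span_self z)
  have m3 : p * ((z * w) * (s * (1 - k * X))) ∈ TwoSidedIdeal.span {z} := by
    refine TwoSidedIdeal.mul_mem_left _ _ _ ?_
    exact TwoSidedIdeal.mul_mem_right _ _ _ (TwoSidedIdeal.mul_mem_right _ _ _ (mem_span_self z))
  have hmem : (p + (1 - p * X) * k) * (X + Y * (q * (s * (1 - k * X))))
      + (1 - p * X) * (z * w2) * (1 - k * X)
      + p * ((z * w) * (s * (1 - k * X)))
      ∈ TwoSidedIdeal.span {X + Y * (q * (s * (1 - k * X)))} ⊔ TwoSidedIdeal.span {z} :=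
    TwoSidedIdeal.add_mem _ (TwoSidedIdeal.add_mem _ (mem_sup_left m1) (mem_sup_right m2))
      (mem_sup_right m3)
  have key : (p + (1 - p * X) * k) * (X + Y * (q * (s * (1 - k * X))))
      + (1 - p * X) * (z * w2) * (1 - k * X)
      + p * ((z * w) * (s * (1 - k * X))) = 1 := by
    rw [hzw, hzw2]; noncomm_ring
  rw [key] at hmem
  exact TwoSidedIdeal.eq_top _ hmem

end Helpers

/-- Theorem 10 (first part): every Bézout L-ring of (two-sided) almost stable
range 1 has stable range 2. -/
theorem stmt_12 {R : Type*} [Ring R] [Nontrivial R]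
    (hrBez : ∀ a b : R, ∃ d : R,
      {x : R | ∃ u v : R, x = a * u + b * v} = {x : R | ∃ u : R, x = d * u})
    (hlBez : ∀ a b : R, ∃ d : R,
      {x : R | ∃ u v : R, x = u * a + v * b} = {x : R | ∃ u : R, x = u * d})
    (hL : ∀ a : R, TwoSidedIdeal.span {a} = ⊤ → IsUnit a)
    (hASR1 : ∀ a b c : R, c ≠ 0 →
      TwoSidedIdeal.span {a} ⊔ TwoSidedIdeal.span {b} ⊔ TwoSidedIdeal.span {c} = ⊤ →
      ∃ l : R, TwoSidedIdeal.span {l * a + b} ⊔ TwoSidedIdeal.span {c} = ⊤) :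
    ∀ a b c : R, (∃ u v w : R, a * u + b * v + c * w = 1) →
      ∃ l m : R, ∃ u v : R, (a + c * l) * u + (b + c * m) * v = 1 := by
  intro a b c ⟨u₀, v₀, w₀, h⟩
  by_cases hc : c = 0
  · refine ⟨0, 0, u₀, v₀, ?_⟩
    subst hc
    simpa using by
      calc a * u₀ + b * v₀ = a * u₀ + b * v₀ + 0 * w₀ := by noncomm_ring
        _ = 1 := h
  by_cases ha : a = 0
  · refine ⟨w₀, 0, 1, v₀, ?_⟩
    subst ha
    calc (0 + c * w₀) * 1 + (b + c * 0) * v₀ = 0 * u₀ + b * v₀ + c * w₀ := by noncomm_ring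
      _ = 1 := h
  -- main case
  have hT : TwoSidedIdeal.span {b} ⊔ TwoSidedIdeal.span {c} ⊔ TwoSidedIdeal.span {a} = ⊤ := by
    apply TwoSidedIdeal.eq_top
    rw [← h]
    refine TwoSidedIdeal.add_mem _ (TwoSidedIdeal.add_mem _ ?_ ?_) ?_
    · exact mem_sup_right ((TwoSidedIdeal.span {a}).mul_mem_right a u₀ (mem_span_self a))
    · exact mem_sup_left (mem_sup_left
        ((TwoSidedIdeal.span {b}).mul_mem_right b v₀ (mem_span_self b)))
    · exact mem_sup_left (mem_sup_right
        ((TwoSidedIdeal.span {c}).mul_mem_right c w₀ (mem_span_self c)))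
  obtain ⟨m, hm⟩ := flip_asr1 hrBez hL hASR1 ha hT
  by_cases hB : b + c * m = 0
  · -- then span a = ⊤, so a is a unit
    have hspa : TwoSidedIdeal.span {a} = ⊤ := by
      rw [hB] at hm
      rw [eq_top_iff, ← hm]
      refine sup_le ?_ le_rfl
      apply span_singleton_le
      simpa using (TwoSidedIdeal.span {a}).zero_mem
    obtain ⟨ua, hua⟩ := hL a hspa
    refine ⟨0, m, (↑ua⁻¹ : Rˣ), 0, ?_⟩
    rw [hB]
    calc (a + c * 0) * (↑ua⁻¹ : Rˣ) + (0 : R) * 0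
        = a * (↑ua⁻¹ : Rˣ) := by noncomm_ring
      _ = (↑ua : R) * (↑ua⁻¹ : Rˣ) := by rw [hua]
      _ = 1 := ua.mul_inv
  -- second flip
  have hT2 : TwoSidedIdeal.span {a} ⊔ TwoSidedIdeal.span {c} ⊔
      TwoSidedIdeal.span {b + c * m} = ⊤ := by
    apply TwoSidedIdeal.eq_top
    rw [← h]
    refine TwoSidedIdeal.add_mem _ (TwoSidedIdeal.add_mem _ ?_ ?_) ?_
    · exact mem_sup_left (mem_sup_left
        ((TwoSidedIdeal.span {a}).mul_mem_right a u₀ (mem_span_self a)))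
    · -- b * v₀ ∈ sup : b = (b + c*m) - c*m
      have hb : b ∈ TwoSidedIdeal.span {a} ⊔ TwoSidedIdeal.span {c} ⊔
          TwoSidedIdeal.span {b + c * m} := by
        have h1 : b + c * m ∈ TwoSidedIdeal.span {a} ⊔ TwoSidedIdeal.span {c} ⊔
            TwoSidedIdeal.span {b + c * m} := mem_sup_right (mem_span_self _)
        have h2 : c * m ∈ TwoSidedIdeal.span {a} ⊔ TwoSidedIdeal.span {c} ⊔
            TwoSidedIdeal.span {b + c * m} := mem_sup_left (mem_sup_right
            ((TwoSidedIdeal.span {c}).mul_mem_right c m (mem_span_self c)))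
        simpa using TwoSidedIdeal.sub_mem _ h1 h2
      exact TwoSidedIdeal.mul_mem_right _ b v₀ hb
    · exact mem_sup_left (mem_sup_right
        ((TwoSidedIdeal.span {c}).mul_mem_right c w₀ (mem_span_self c)))
  obtain ⟨l, hl⟩ := flip_asr1 hrBez hL hASR1 hB hT2
  obtain ⟨u, v, huv⟩ := pair_unimod hrBez hL hl
  exact ⟨l, m, u, v, huv⟩
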